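/- Let r > 0 and k ≥ 1 be a natural number. Let λ : ℕ → ℂ be a sequence of nonzero complex numbers with |λ_n| → ∞, let m : ℕ → ℕ, and let coefficients c_{n,η} ∈ ℂ be given for 0 ≤ η ≤ m_n; write M_n = max_{0≤η≤m_n} |c_{n,η}|. Assume that ∑_n M_n · B(r, λ_n, k, m_n) · (|λ_n| + 1)^k · e^{r·|Im λ_n|} < ∞. Let R > r and suppose there exists N > 0 such that sup over all n with |λ_n| > N of (|Im λ_n| + m_n)/ln(2 + |λ_n|) is strictly less than 1/(R − r). Then ∑_n M_n · B(R, λ_n, k−1, m_n) · (|λ_n| + 1)^{k−1} · e^{R·|Im λ_n|} < ∞. -/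

import Mathlib

open Complex Filter

/-- The weight `B(R, λ, q, m)` from the paper (it depends only on `R`, `q`, `m`). -/
noncomputable def Bwt (R : ℝ) (_lam : ℂ) (q m : ℕ) : ℝ :=
  if R > 1 then R ^ m
  else if R = 1 then (m : ℝ) + 1
  else min ((q : ℝ) + 1) ((m : ℝ) + 1)

lemma one_le_Bwt {R : ℝ} (hR : 0 < R) (l : ℂ) (q m : ℕ) : 1 ≤ Bwt R l q m := by
  unfold Bwt
  split_ifs with h1 h2
  · exact one_le_pow₀ h1.le
  · have : (0:ℝ) ≤ (m:ℝ) := Nat.cast_nonneg m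
    linarith
  · exact le_min (by linarith [Nat.cast_nonneg (α := ℝ) q]) (by linarith [Nat.cast_nonneg (α := ℝ) m])

lemma Bwt_le {r R : ℝ} (hr : 0 < r) (hrR : r < R) (l : ℂ) (q q' m : ℕ) :
    Bwt R l q' m ≤ ((m:ℝ)+1) * Real.exp ((R-r)*m) * Bwt r l q m := by
  have hB1 : 1 ≤ Bwt r l q m := one_le_Bwt hr l q m
  have hm1 : (1:ℝ) ≤ (m:ℝ) + 1 := by have : (0:ℝ) ≤ (m:ℝ) := Nat.cast_nonneg m; linarith
  have hexp : 1 ≤ Real.exp ((R-r)*m) := Real.one_le_exp (by have : (0:ℝ) ≤ (m:ℝ) := Nat.cast_nonneg m; nlinarith)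
  have hR0 : (0:ℝ) ≤ R := by linarith
  by_cases hR1 : R > 1
  · rw [Bwt, if_pos hR1]
    by_cases hr1 : r > 1
    · rw [Bwt, if_pos hr1]
      have key : R ≤ Real.exp (R - r) * r := by
        have h := Real.add_one_le_exp (R - r)
        nlinarith
      calc R^m ≤ (Real.exp (R-r) * r)^m := pow_le_pow_left₀ hR0 key m
        _ = Real.exp ((R-r)*m) * r^m := by
            rw [mul_pow, mul_comm (R-r) (m:ℝ), Real.exp_nat_mul]
        _ ≤ ((m:ℝ)+1) * (Real.exp ((R-r)*m) * r^m) :=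
            le_mul_of_one_le_left (by positivity) hm1
        _ = ((m:ℝ)+1) * Real.exp ((R-r)*m) * r^m := (mul_assoc _ _ _).symm
    · push_neg at hr1
      have key : R ≤ Real.exp (R - r) := by
        have h := Real.add_one_le_exp (R - r)
        linarith
      calc R^m ≤ (Real.exp (R-r))^m := pow_le_pow_left₀ hR0 key m
        _ = Real.exp ((R-r)*m) := by rw [mul_comm (R-r) (m:ℝ), Real.exp_nat_mul]
        _ = Real.exp ((R-r)*m) * 1 := (mul_one _).symm
        _ ≤ ((m:ℝ)+1) * Real.exp ((R-r)*m) * Bwt r l q m :=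
            mul_le_mul (le_mul_of_one_le_left (Real.exp_nonneg _) hm1) hB1 zero_le_one
              (by positivity)
  · rw [Bwt, if_neg hR1]
    have hle : (if R = 1 then (m : ℝ) + 1 else min ((q' : ℝ) + 1) ((m : ℝ) + 1)) ≤ (m:ℝ)+1 := by
      split_ifs
      · exact le_refl _
      · exact min_le_right _ _
    have h4 : (1:ℝ) ≤ Real.exp ((R-r)*m) * Bwt r l q m := by
      have := mul_le_mul hexp hB1 zero_le_one (Real.exp_nonneg _)
      simpa using this
    calc (if R = 1 then (m : ℝ) + 1 else min ((q' : ℝ) + 1) ((m : ℝ) + 1))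
        ≤ (m:ℝ)+1 := hle
      _ ≤ ((m:ℝ)+1) * (Real.exp ((R-r)*m) * Bwt r l q m) :=
          le_mul_of_one_le_right (by positivity) h4
      _ = ((m:ℝ)+1) * Real.exp ((R-r)*m) * Bwt r l q m := (mul_assoc _ _ _).symm

lemma eventually_bound (θ β : ℝ) (hθ : 0 ≤ θ) (hβ : β < 1) :
    ∀ᶠ a : ℝ in atTop, (θ * Real.log (2+a) + 1) * (2+a)^β ≤ a + 1 := by
  have key : ∀ᶠ y : ℝ in atTop, (θ * Real.log y + 1) * y^β ≤ y - 1 := by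
    have t1 : Tendsto (fun y : ℝ => Real.log y / y^(1-β)) atTop (nhds 0) :=
      (isLittleO_log_rpow_atTop (by linarith)).tendsto_div_nhds_zero
    have t2 : Tendsto (fun y : ℝ => y^(β-1)) atTop (nhds 0) := by
      have := tendsto_rpow_neg_atTop (y := 1 - β) (by linarith)
      convert this using 2 with y
      ring_nf
    have T : Tendsto (fun y : ℝ => θ * (Real.log y / y^(1-β)) + y^(β-1)) atTop (nhds 0) := by
      have := (t1.const_mul θ).add t2
      simpa using this
    have hev : ∀ᶠ y : ℝ in atTop,
        θ * (Real.log y / y^(1-β)) + y^(β-1) < 1/2 := T.eventually_lt_const (by norm_num)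
    filter_upwards [hev, eventually_ge_atTop (2:ℝ)] with y hy hy2
    have hy0 : (0:ℝ) < y := by linarith
    have hinv : y^(β-1) = (y^(1-β))⁻¹ := by
      rw [show β - 1 = -(1-β) by ring, Real.rpow_neg hy0.le]
    have hyb : y^β = y^(β-1) * y := by
      rw [show β = β - 1 + 1 by ring]
      rw [Real.rpow_add_one hy0.ne' (β-1)]
      ring_nf
    have hexpand : (θ * Real.log y + 1) * y^β
        = (θ * (Real.log y / y^(1-β)) + y^(β-1)) * y := by
      rw [hyb, hinv]; field_simp
    rw [hexpand]
    nlinarith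
  have htend : Tendsto (fun a : ℝ => 2 + a) atTop atTop := tendsto_atTop_add_const_left _ _ tendsto_id
  filter_upwards [htend.eventually key] with a ha
  linarith

lemma key_ineq {r R θ : ℝ} (hr : 0 < r) (hrR : r < R) (hθ : 0 ≤ θ)
    (k : ℕ) (hk : 1 ≤ k) (l : ℂ) (mn : ℕ) (Mn : ℝ) (hMn : 0 ≤ Mn)
    (h1 : |l.im| + (mn:ℝ) ≤ θ * Real.log (2 + ‖l‖))
    (h2 : (θ * Real.log (2 + ‖l‖) + 1) * (2 + ‖l‖) ^ (θ*(R-r))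
        ≤ ‖l‖ + 1) :
    Mn * Bwt R l (k-1) mn * (‖l‖ + 1)^(k-1) * Real.exp (R * |l.im|) ≤
    Mn * Bwt r l k mn * (‖l‖ + 1)^k * Real.exp (r * |l.im|) := by
  set a := ‖l‖ with ha_def
  have ha : 0 ≤ a := norm_nonneg _
  have h2a : (0:ℝ) < 2 + a := by linarith
  have hlog : 0 ≤ Real.log (2 + a) := Real.log_nonneg (by linarith)
  have hB0 : 0 ≤ Bwt r l k mn := le_trans zero_le_one (one_le_Bwt hr l k mn)
  have step1 : Real.exp ((R-r) * (|l.im| + mn)) ≤ (2+a) ^ (θ*(R-r)) := by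
    rw [Real.rpow_def_of_pos h2a]
    apply Real.exp_le_exp.mpr
    calc (R-r) * (|l.im| + mn) ≤ (R-r) * (θ * Real.log (2+a)) :=
          mul_le_mul_of_nonneg_left h1 (by linarith)
      _ = Real.log (2+a) * (θ*(R-r)) := by ring
  have step2 : ((mn:ℝ)+1) ≤ θ * Real.log (2+a) + 1 := by
    have him : (0:ℝ) ≤ |l.im| := abs_nonneg _
    linarith
  have key : ((mn:ℝ)+1) * Real.exp ((R-r)*mn) * Real.exp ((R-r)*|l.im|) ≤ a + 1 := by
    have e : Real.exp ((R-r)*mn) * Real.exp ((R-r)*|l.im|)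
        = Real.exp ((R-r)*(|l.im| + mn)) := by
      rw [← Real.exp_add]; ring_nf
    calc ((mn:ℝ)+1) * Real.exp ((R-r)*mn) * Real.exp ((R-r)*|l.im|)
        = ((mn:ℝ)+1) * Real.exp ((R-r)*(|l.im| + mn)) := by rw [mul_assoc, e]
      _ ≤ (θ * Real.log (2+a) + 1) * (2+a) ^ (θ*(R-r)) :=
          mul_le_mul step2 step1 (Real.exp_nonneg _) (by nlinarith)
      _ ≤ a + 1 := h2
  have hexpR : Real.exp (R*|l.im|) = Real.exp ((R-r)*|l.im|) * Real.exp (r*|l.im|) := by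
    rw [← Real.exp_add]; ring_nf
  have hpow : (a+1)^(k-1) * (a+1) = (a+1)^k := by
    rw [← pow_succ]
    congr 1
    omega
  calc Mn * Bwt R l (k-1) mn * (a+1)^(k-1) * Real.exp (R*|l.im|)
      ≤ Mn * (((mn:ℝ)+1) * Real.exp ((R-r)*mn) * Bwt r l k mn) * (a+1)^(k-1)
          * Real.exp (R*|l.im|) := by
        have := Bwt_le hr hrR l k (k-1) mn
        gcongr
    _ = (Mn * Bwt r l k mn * (a+1)^(k-1) * Real.exp (r*|l.im|))
          * (((mn:ℝ)+1) * Real.exp ((R-r)*mn) * Real.exp ((R-r)*|l.im|)) := by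
        rw [hexpR]; ring
    _ ≤ (Mn * Bwt r l k mn * (a+1)^(k-1) * Real.exp (r*|l.im|)) * (a + 1) := by
        apply mul_le_mul_of_nonneg_left key
        positivity
    _ = Mn * Bwt r l k mn * (a+1)^k * Real.exp (r*|l.im|) := by
        rw [← hpow]; ring

theorem summability_transfer (r : ℝ) (hr : 0 < r) (k : ℕ) (hk : 1 ≤ k)
    (lam : ℕ → ℂ) (hlam0 : ∀ n, lam n ≠ 0)
    (hlam : Tendsto (fun n => ‖lam n‖) atTop atTop)
    (m : ℕ → ℕ) (c : ℕ → ℕ → ℂ)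
    (M : ℕ → ℝ)
    (hM : ∀ n, M n = (Finset.range (m n + 1)).sup' (by simp) fun η => ‖c n η‖)
    (hsum : Summable fun n =>
      M n * Bwt r (lam n) k (m n) * (‖lam n‖ + 1) ^ k *
        Real.exp (r * |(lam n).im|))
    (R : ℝ) (hR : r < R)
    (hgrow : ∃ N > (0 : ℝ), ∃ θ : ℝ, θ < 1 / (R - r) ∧
      ∀ n, ‖lam n‖ > N →
        (|(lam n).im| + (m n : ℝ)) / Real.log (2 + ‖lam n‖) ≤ θ) :
    Summable fun n =>
      M n * Bwt R (lam n) (k - 1) (m n) * (‖lam n‖ + 1) ^ (k - 1) *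
        Real.exp (R * |(lam n).im|) := by
  obtain ⟨N, hN, θ, hθlt, hθ⟩ := hgrow
  have hRr : (0:ℝ) < R - r := by linarith
  set θ' : ℝ := max θ 0 with hθ'def
  have hθ'0 : 0 ≤ θ' := le_max_right _ _
  have hθ'lt : θ' < 1 / (R - r) := max_lt hθlt (by positivity)
  have hβ : θ' * (R - r) < 1 := by
    have := mul_lt_mul_of_pos_right hθ'lt hRr
    rwa [one_div, inv_mul_cancel₀ hRr.ne'] at this
  -- nonnegativity of M
  have hM0 : ∀ n, 0 ≤ M n := fun n => by
    rw [hM n]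
    exact le_trans (norm_nonneg (c n 0))
      (Finset.le_sup' (fun η => ‖c n η‖) (by simp : 0 ∈ Finset.range (m n + 1)))
  have hnn : ∀ n, 0 ≤ M n * Bwt R (lam n) (k - 1) (m n) *
      (‖lam n‖ + 1) ^ (k - 1) * Real.exp (R * |(lam n).im|) := by
    intro n
    have hB : 0 ≤ Bwt R (lam n) (k-1) (m n) :=
      le_trans zero_le_one (one_le_Bwt (by linarith) _ _ _)
    have := hM0 n
    positivity
  have hev : ∀ᶠ n in atTop,
      M n * Bwt R (lam n) (k - 1) (m n) * (‖lam n‖ + 1) ^ (k - 1) *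
        Real.exp (R * |(lam n).im|) ≤
      M n * Bwt r (lam n) k (m n) * (‖lam n‖ + 1) ^ k *
        Real.exp (r * |(lam n).im|) := by
    filter_upwards [hlam.eventually_gt_atTop N,
      hlam.eventually (eventually_bound θ' (θ'*(R-r)) hθ'0 hβ)] with n hn hb
    have hlogpos : 0 < Real.log (2 + ‖lam n‖) := by
      apply Real.log_pos
      have := (norm_nonneg (lam n))
      linarith
    have h1 : |(lam n).im| + (m n : ℝ) ≤ θ' * Real.log (2 + ‖lam n‖) := by
      have := hθ n hn
      have h' : (|(lam n).im| + (m n : ℝ)) / Real.log (2 + ‖lam n‖) ≤ θ' :=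
        le_trans this (le_max_left _ _)
      calc |(lam n).im| + (m n : ℝ)
          = ((|(lam n).im| + (m n : ℝ)) / Real.log (2 + ‖lam n‖))
              * Real.log (2 + ‖lam n‖) := by field_simp
        _ ≤ θ' * Real.log (2 + ‖lam n‖) :=
            mul_le_mul_of_nonneg_right h' hlogpos.le
    exact key_ineq hr hR hθ'0 k hk (lam n) (m n) (M n) (hM0 n) h1 hb
  obtain ⟨N₀, hN₀⟩ := eventually_atTop.mp hev
  have h1 : Summable (fun n => M (n + N₀) * Bwt r (lam (n + N₀)) k (m (n + N₀)) *
      (‖lam (n + N₀)‖ + 1) ^ k * Real.exp (r * |(lam (n + N₀)).im|)) :=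
    (summable_nat_add_iff N₀).mpr hsum
  have h2 : Summable (fun n => M (n + N₀) * Bwt R (lam (n + N₀)) (k - 1) (m (n + N₀)) *
      (‖lam (n + N₀)‖ + 1) ^ (k - 1) * Real.exp (R * |(lam (n + N₀)).im|)) :=
    Summable.of_nonneg_of_le (fun n => hnn _) (fun n => hN₀ _ (Nat.le_add_left _ _)) h1
  exact (summable_nat_add_iff N₀).mp h2
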